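/- In the Section-4 construction, for all integers 1 ≤ k′ < k and all i ∈ {1,2,3}, the relator r_i^k can be written as a concatenation r_i^k = ∏_{j=1}^m y_{(i_j,l_j)}^{k′} for some integer m ≥ 2 and indices (i_j, l_j) such that: (1) i_1 ≠ i_2 and i_{m−1} ≠ i_m; and (2) whenever i_j = i_{j+1}, one has i_{j−1} ≠ i_j and i_{j+2} ≠ i_{j+1}. -/

import Mathlib

namespace SmallCancel

/-- A word over `S`: a finite sequence of letters from the symmetrized alphabet
`S ∪ S⁻¹`, encoded as pairs `(s, b)` where `b = true` denotes the letter `s`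
and `b = false` denotes its formal inverse `s⁻¹`. -/
abbrev Word (S : Type) := List (S × Bool)

/-- The formal inverse of a word. -/
def wInv {S : Type} (w : Word S) : Word S := (w.map fun a => (a.1, !a.2)).reverse

/-- A word is reduced if no letter is immediately followed by its inverse. -/
def Reduced {S : Type} (w : Word S) : Prop := w.Chain' fun a b => b ≠ (a.1, !a.2)

/-- A word is cyclically reduced if all of its cyclic shifts are reduced. -/
def CyclicallyReduced {S : Type} (w : Word S) : Prop := ∀ n, Reduced (w.rotate n)

/-- `R̄`: the set of all cyclic shifts of elements of `R` and of their inverses. -/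
def cyclicClosure {S : Type} (R : Set (Word S)) : Set (Word S) :=
  {w | ∃ r ∈ R, ∃ n, w = r.rotate n ∨ w = (wInv r).rotate n}

/-- `p` is a piece with respect to `R` if it is a prefix of two distinct elements
of `R̄`. -/
def IsPiece {S : Type} (R : Set (Word S)) (p : Word S) : Prop :=
  ∃ r₁ ∈ cyclicClosure R, ∃ r₂ ∈ cyclicClosure R, r₁ ≠ r₂ ∧ p <+: r₁ ∧ p <+: r₂

/-- The `C'(λ)` small-cancellation condition: every piece `p` that is a subword of
some `r ∈ R̄` satisfies `|p| < λ|r|`. -/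
def SmallCancellation {S : Type} (R : Set (Word S)) (lam : ℝ) : Prop :=
  ∀ p, IsPiece R p → ∀ r ∈ cyclicClosure R, p <:+: r →
    (p.length : ℝ) < lam * r.length

/-- The element of the presented group `⟨S | R⟩` represented by a word `w`. -/
def toPresented {S : Type} (R : Set (Word S)) (w : Word S) :
    PresentedGroup {g : FreeGroup S | ∃ r ∈ R, g = FreeGroup.mk r} :=
  QuotientGroup.mk (FreeGroup.mk w)

/-- A word `w` is geodesic if every word representing the same element of the
presented group `⟨S | R⟩` is at least as long as `w`. -/
def IsGeodesicWord {S : Type} (R : Set (Word S)) (w : Word S) : Prop :=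
  ∀ v : Word S, toPresented R v = toPresented R w → w.length ≤ v.length

/-- The finite prefix of length `n` of an infinite word `γ`. -/
def rayPrefix {S : Type} (γ : ℕ → S × Bool) (n : ℕ) : Word S := (List.range n).map γ

/-- A geodesic ray: an infinite word all of whose finite prefixes are geodesic. -/
def IsGeodesicRay {S : Type} (R : Set (Word S)) (γ : ℕ → S × Bool) : Prop :=
  ∀ n, IsGeodesicWord R (rayPrefix γ n)

/-- The intersection function of a ray `γ`:
`ρ_γ(t) = max{|w| : w is a subword of some r ∈ R̄ with |r| ≤ t and a subword of γ}`. -/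
noncomputable def intersectionFn {S : Type} (R : Set (Word S)) (γ : ℕ → S × Bool)
    (t : ℕ) : ℕ :=
  sSup {n | ∃ w : Word S, (∃ r ∈ cyclicClosure R, r.length ≤ t ∧ w <:+: r) ∧
    (∃ m, w <:+: rayPrefix γ m) ∧ w.length = n}

/-- A function is sublinear if `ρ(n)/n → 0`. -/
def Sublinear (ρ : ℕ → ℝ) : Prop :=
  Filter.Tendsto (fun n => ρ n / n) Filter.atTop (nhds 0)

/-- A weakly increasing function `f : ℕ → ℝ` is viable if `f(n) ≥ 6` for all `n`
and `f(n) → ∞`. -/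
def Viable (f : ℕ → ℝ) : Prop :=
  Monotone f ∧ (∀ n, 6 ≤ f n) ∧ Filter.Tendsto f Filter.atTop Filter.atTop

/-- The `C'(1/f)` small-cancellation condition for a set of relators: every piece `p`
that is a subword of some `r ∈ R̄` satisfies `|p| < |r|/f(|r|)`. -/
def CPrimeOverF {S : Type} (R : Set (Word S)) (f : ℕ → ℝ) : Prop :=
  ∀ p, IsPiece R p → ∀ r ∈ cyclicClosure R, p <:+: r →
    (p.length : ℝ) < (r.length : ℝ) / f r.length

/-- The pair `(x, R)` satisfies the `C'(1/f)` condition: every word `p` that is a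
subword both of `x` and of some `r ∈ R̄` satisfies `|p| < |r|/f(|r|)`. -/
def PairCPrimeOverF {S : Type} (x : Word S) (R : Set (Word S)) (f : ℕ → ℝ) : Prop :=
  ∀ p, p <:+: x → ∀ r ∈ cyclicClosure R, p <:+: r →
    (p.length : ℝ) < (r.length : ℝ) / f r.length

/-- The increasing partial small-cancellation condition (IPSC). -/
def IPSC {S : Type} (R : Set (Word S)) : Prop :=
  ∀ n : ℕ → ℕ, (∀ i, 0 < n i) → ∃ f : ℕ → ℝ, Viable f ∧
    ∀ K : ℕ, ∃ i, K ≤ i ∧ ∃ x y : Word S, x ++ y ∈ cyclicClosure R ∧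
      n i ≤ (x ++ y).length ∧ ((x ++ y).length : ℝ) / i ≤ x.length ∧
      PairCPrimeOverF x R f

end SmallCancel

namespace SmallCancel

/-- A word `w` of length `n` (with letters in `S`) is non-periodic if the `2n` words
obtained as cyclic shifts of `w` and of `w⁻¹` are pairwise distinct. -/
def NonPeriodic {S : Type} (w : Word S) : Prop :=
  Function.Injective fun p : Fin w.length × Bool =>
    if p.2 then w.rotate p.1 else (wInv w).rotate p.1

/-- The data of the Section-4 construction: an integer `N ≥ 28`, a positive multiple
`L` of `N`, and three distinct non-periodic positive words `r_1¹, r_2¹, r_3¹` of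
length `L` over `S` (indexed by `ZMod 3`, with the paper's index `i ∈ {1,2,3}` taken
modulo 3) satisfying the `C'(1/(4N))` small-cancellation condition, each given as the
concatenation of `N` blocks `y_(i,l)¹` of length `L/N`. -/
structure Section4Data (S : Type) where
  /-- the parameter `N ≥ 28` -/
  N : ℕ
  hN : 28 ≤ N
  /-- the length `L`, a positive multiple of `N` -/
  L : ℕ
  hdvd : N ∣ L
  hLpos : 0 < L
  /-- the blocks `y_(i,l)¹`, so that `r_i¹ = y_(i,1)¹ ⋯ y_(i,N)¹` -/
  y1 : ZMod 3 → Fin N → Word S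
  hlen : ∀ i l, (y1 i l).length = L / N
  /-- the level-1 relators use only letters of `S` (no inverse letters) -/
  hletters : ∀ i l, ∀ a ∈ y1 i l, a.2 = true
  /-- the three level-1 relators are pairwise distinct -/
  hdistinct : Function.Injective fun i : ZMod 3 => (List.ofFn fun l => y1 i l).flatten
  /-- the three level-1 relators are non-periodic -/
  hnonper : ∀ i : ZMod 3, NonPeriodic ((List.ofFn fun l => y1 i l).flatten)
  /-- the level-1 relators satisfy the `C'(1/(4N))` condition -/
  hsc : SmallCancellation
    {w | ∃ i : ZMod 3, w = (List.ofFn fun l => y1 i l).flatten} (1 / (4 * N))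

namespace Section4Data

variable {S : Type}

/-- The words `y_(i,l)^k` of the Section-4 construction, defined for levels `k ≥ 1`
by `y_(i,l)^{k+1} = ∏_{j=1}^{N} (y_(i,j)^k · y_(i+1,l)^k)` (the value at `k = 0` is
irrelevant and set to `y1`). -/
def y (D : Section4Data S) : ℕ → ZMod 3 → Fin D.N → Word S
  | 0 => D.y1
  | 1 => D.y1
  | (k + 2) => fun i l =>
      (List.ofFn fun j : Fin D.N => D.y (k + 1) i j ++ D.y (k + 1) (i + 1) l).flatten

/-- The relators `r_i^k = ∏_{j=1}^{N} y_(i,j)^k` (for `k = 1` this agrees with the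
given level-1 relators). -/
def r (D : Section4Data S) (k : ℕ) (i : ZMod 3) : Word S :=
  (List.ofFn fun j : Fin D.N => D.y k i j).flatten

/-- The set of relators `R = {r_i^k : 1 ≤ i ≤ 3, k ≥ 1}` of the Section-4
construction. -/
def R (D : Section4Data S) : Set (Word S) :=
  {w | ∃ k, 1 ≤ k ∧ ∃ i : ZMod 3, w = D.r k i}

end Section4Data

end SmallCancel

open SmallCancel Section4Data

namespace Stmt10Aux

open List

/-- "Alternating enough": every adjacent equal pair has distinct neighbours. -/
def Alt (τ : List (ZMod 3)) : Prop :=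
  ∀ j, j + 1 < τ.length → τ.getD j 0 = τ.getD (j+1) 0 →
    (1 ≤ j → τ.getD (j-1) 0 ≠ τ.getD j 0) ∧
    (j + 2 < τ.length → τ.getD (j+2) 0 ≠ τ.getD (j+1) 0)

def Good (τ : List (ZMod 3)) : Prop :=
  2 ≤ τ.length ∧ τ.getD 0 0 ≠ τ.getD 1 0 ∧
    τ.getD (τ.length - 2) 0 ≠ τ.getD (τ.length - 1) 0 ∧ Alt τ

lemma Good_append {τ₁ τ₂ : List (ZMod 3)} (h₁ : Good τ₁) (h₂ : Good τ₂) :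
    Good (τ₁ ++ τ₂) := by
  obtain ⟨n1len, h1a, h1b, h1alt⟩ := h₁
  obtain ⟨n2len, h2a, h2b, h2alt⟩ := h₂
  have hlen : (τ₁ ++ τ₂).length = τ₁.length + τ₂.length := List.length_append
  set n₁ := τ₁.length with hn₁
  set n₂ := τ₂.length with hn₂
  have hL : ∀ j, j < n₁ → (τ₁ ++ τ₂).getD j 0 = τ₁.getD j 0 :=
    fun j hj => List.getD_append _ _ _ _ hj
  have hR : ∀ j, n₁ ≤ j → (τ₁ ++ τ₂).getD j 0 = τ₂.getD (j - n₁) 0 :=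
    fun j hj => List.getD_append_right _ _ _ _ hj
  refine ⟨by omega, ?_, ?_, ?_⟩
  · rw [hL 0 (by omega), hL 1 (by omega)]; exact h1a
  · rw [hlen, hR (n₁ + n₂ - 2) (by omega), hR (n₁ + n₂ - 1) (by omega)]
    have e1 : n₁ + n₂ - 2 - n₁ = n₂ - 2 := by omega
    have e2 : n₁ + n₂ - 1 - n₁ = n₂ - 1 := by omega
    rw [e1, e2]; exact h2b
  · intro j hj heq
    rw [hlen] at hj
    rcases lt_trichotomy (j+1) n₁ with hc | hc | hc
    · rw [hL j (by omega), hL (j+1) hc] at heq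
      by_cases hend : j + 2 = n₁
      · exfalso; apply h1b
        have e1 : n₁ - 2 = j := by omega
        have e2 : n₁ - 1 = j + 1 := by omega
        rw [e1, e2]; exact heq
      · have h := h1alt j hc heq
        constructor
        · intro hj1; rw [hL (j-1) (by omega), hL j (by omega)]; exact h.1 hj1
        · intro _; rw [hL (j+2) (by omega), hL (j+1) (by omega)]; exact h.2 (by omega)
    · constructor
      · intro _
        rw [hL (j-1) (by omega), hL j (by omega)]
        have e1 : j - 1 = n₁ - 2 := by omega
        have e2 : j = n₁ - 1 := by omega
        rw [e1, e2]; exact h1b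
      · intro hj2
        rw [hR (j+2) (by omega), hR (j+1) (by omega)]
        have e1 : j + 2 - n₁ = 1 := by omega
        have e2 : j + 1 - n₁ = 0 := by omega
        rw [e1, e2]; exact fun h => h2a h.symm
    · have hjge : n₁ ≤ j := by omega
      rw [hR j hjge, hR (j+1) (by omega)] at heq
      have e : j + 1 - n₁ = (j - n₁) + 1 := by omega
      rw [e] at heq
      by_cases h0 : j - n₁ = 0
      · exfalso; apply h2a; rw [h0] at heq; simpa using heq
      · have hj'1 : (j - n₁) + 1 < n₂ := by omega
        have h := h2alt (j - n₁) hj'1 heq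
        constructor
        · intro _
          rw [hR (j-1) (by omega), hR j hjge]
          have e1 : j - 1 - n₁ = (j - n₁) - 1 := by omega
          rw [e1]; exact h.1 (by omega)
        · intro hj2
          rw [hR (j+2) (by omega), hR (j+1) (by omega)]
          have e1 : j + 2 - n₁ = (j - n₁) + 2 := by omega
          rw [e1, e]; exact h.2 (by omega)

lemma Good_flatten : ∀ (L : List (List (ZMod 3))), L ≠ [] → (∀ τ ∈ L, Good τ) →
    Good L.flatten := by
  intro L
  induction L with
  | nil => simp
  | cons hd tl ih =>
    intro _ hall
    rw [List.flatten_cons]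
    rcases eq_or_ne tl [] with rfl | hne
    · simpa using hall hd (by simp)
    · exact Good_append (hall hd (by simp))
        (ih hne (fun τ hτ => hall τ (by simp [hτ])))

lemma Good_pair {a b : ZMod 3} (h : a ≠ b) : Good [a, b] := by
  refine ⟨by simp, by simpa using h, by simpa using h, ?_⟩
  intro j hj heq
  simp only [List.length_cons, List.length_nil] at hj
  have hj0 : j = 0 := by omega
  subst hj0
  simp [List.getD] at heq
  exact absurd heq h

lemma zmod3_ne_succ : ∀ i : ZMod 3, i ≠ i + 1 := by decide

lemma map_range_getD {α β : Type*} (σ : List α) (g : α → β) (dflt : α) :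
    (List.range σ.length).map (fun j => g (σ.getD j dflt)) = σ.map g := by
  apply List.ext_getElem
  · simp
  · intro n h1 h2
    simp only [List.getElem_map, List.getElem_range]
    rw [List.getD_eq_getElem]

end Stmt10Aux

namespace SmallCancel
namespace Section4Data

open Stmt10Aux

variable {S : Type}

/-- The decomposition pattern: `sig d i l` records the level-`k'` blocks of
`y^{k'+d}_{(i,l)}`. -/
def sig (D : Section4Data S) : ℕ → ZMod 3 → Fin D.N → List (ZMod 3 × Fin D.N)
  | 0, i, l => [(i, l)]
  | (d+1), i, l =>
      (List.ofFn fun j : Fin D.N => D.sig d i j ++ D.sig d (i+1) l).flatten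

lemma sig_spec (D : Section4Data S) (k' : ℕ) (hk' : 1 ≤ k') :
    ∀ d i l, D.y (k' + d) i l =
      ((D.sig d i l).map fun p => D.y k' p.1 p.2).flatten := by
  intro d
  induction d with
  | zero => intro i l; simp [sig]
  | succ d ih =>
    intro i l
    obtain ⟨k'', rfl⟩ : ∃ k'', k' = k'' + 1 := ⟨k' - 1, by omega⟩
    have harith : k'' + 1 + (d + 1) = (k'' + d) + 2 := by ring
    rw [harith]
    show (List.ofFn fun j : Fin D.N =>
        D.y (k'' + d + 1) i j ++ D.y (k'' + d + 1) (i+1) l).flatten = _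
    have harith2 : k'' + d + 1 = k'' + 1 + d := by ring
    simp only [harith2, ih]
    simp [sig, List.map_flatten, List.flatten_flatten, List.map_ofFn,
      Function.comp_def, List.map_append, List.flatten_append]

lemma good_sig (D : Section4Data S) :
    ∀ d i l, Good ((D.sig (d+1) i l).map Prod.fst) := by
  have hN : 0 < D.N := by have := D.hN; omega
  intro d
  induction d with
  | zero =>
    intro i l
    have : (D.sig 1 i l).map Prod.fst =
        (List.ofFn fun _ : Fin D.N => [i, i+1]).flatten := by
      simp [sig, List.map_flatten, List.map_ofFn, Function.comp_def]
    rw [this]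
    apply Good_flatten
    · intro h
      have := congrArg List.length h
      simp at this; omega
    · intro τ hτ
      rw [List.mem_ofFn] at hτ
      obtain ⟨j, rfl⟩ := hτ
      exact Good_pair (zmod3_ne_succ i)
  | succ d ih =>
    intro i l
    have : (D.sig (d+2) i l).map Prod.fst =
        (List.ofFn fun j : Fin D.N =>
          (D.sig (d+1) i j).map Prod.fst ++
          (D.sig (d+1) (i+1) l).map Prod.fst).flatten := by
      simp [sig, List.map_flatten, List.map_ofFn, Function.comp_def, List.map_append]
    rw [this]
    apply Good_flatten
    · intro h
      have := congrArg List.length h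
      simp at this; omega
    · intro τ hτ
      rw [List.mem_ofFn] at hτ
      obtain ⟨j, rfl⟩ := hτ
      exact Good_append (ih i j) (ih (i+1) l)

end Section4Data
end SmallCancel

open Stmt10Aux

/-- Lemma 4.4 of the paper. In the Section-4 construction, for all
`1 ≤ k′ < k` and all `i`, the relator `r_i^k` can be written as a concatenation
`∏_{j=1}^m y_(i_j,l_j)^{k′}` with `m ≥ 2` such that (1) `i_1 ≠ i_2` and
`i_{m-1} ≠ i_m`, and (2) whenever `i_j = i_{j+1}`, the neighbouring indices satisfy
`i_{j-1} ≠ i_j` and `i_{j+2} ≠ i_{j+1}`. (Indices are 0-based here.) -/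
theorem section4_r_decomposition {S : Type} (D : Section4Data S) :
    ∀ k' k : ℕ, 1 ≤ k' → k' < k → ∀ i : ZMod 3,
      ∃ m, 2 ≤ m ∧ ∃ idx : ℕ → ZMod 3 × Fin D.N,
        D.r k i =
          ((List.range m).map fun j => D.y k' (idx j).1 (idx j).2).flatten ∧
        ((idx 0).1 ≠ (idx 1).1 ∧ (idx (m - 2)).1 ≠ (idx (m - 1)).1) ∧
        (∀ j, j + 1 < m → (idx j).1 = (idx (j + 1)).1 →
          (1 ≤ j → (idx (j - 1)).1 ≠ (idx j).1) ∧
          (j + 2 < m → (idx (j + 2)).1 ≠ (idx (j + 1)).1)) := by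
  intro k' k hk' hkk i
  obtain ⟨d, rfl⟩ : ∃ d, k = k' + (d + 1) := ⟨k - k' - 1, by omega⟩
  have hN : 0 < D.N := by have := D.hN; omega
  set sl : List (ZMod 3 × Fin D.N) :=
    (List.ofFn fun j : Fin D.N => D.sig (d+1) i j).flatten with hsl
  have hτ : Good (sl.map Prod.fst) := by
    have h1 : sl.map Prod.fst =
        (List.ofFn fun j : Fin D.N => (D.sig (d+1) i j).map Prod.fst).flatten := by
      simp [hsl, List.map_flatten, List.map_ofFn, Function.comp_def]
    rw [h1]
    apply Good_flatten
    · intro h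
      have := congrArg List.length h
      simp at this; omega
    · intro τ hτ
      rw [List.mem_ofFn] at hτ
      obtain ⟨j, rfl⟩ := hτ
      exact D.good_sig d i j
  have hlen : (sl.map Prod.fst).length = sl.length := List.length_map _
  have hfst : ∀ j, (sl.getD j ((0 : ZMod 3), (⟨0, hN⟩ : Fin D.N))).1
      = (sl.map Prod.fst).getD j 0 :=
    fun j => (List.getD_map sl _ Prod.fst).symm
  refine ⟨sl.length, by rw [← hlen]; exact hτ.1,
    fun j => sl.getD j ((0 : ZMod 3), (⟨0, hN⟩ : Fin D.N)), ?_, ?_, ?_⟩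
  · -- word equation
    have hword : D.r (k' + (d+1)) i =
        (sl.map fun p => D.y k' p.1 p.2).flatten := by
      show (List.ofFn fun j : Fin D.N => D.y (k' + (d+1)) i j).flatten = _
      simp only [D.sig_spec k' hk' (d+1)]
      simp [hsl, List.map_flatten, List.flatten_flatten, List.map_ofFn,
        Function.comp_def]
    exact hword.trans (congrArg List.flatten
      (map_range_getD sl (fun p => D.y k' p.1 p.2) _).symm)
  · constructor
    · show (sl.getD 0 _).1 ≠ (sl.getD 1 _).1
      rw [hfst 0, hfst 1]; exact hτ.2.1
    · show (sl.getD (sl.length - 2) _).1 ≠ (sl.getD (sl.length - 1) _).1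
      rw [hfst, hfst]
      have := hτ.2.2.1
      rw [hlen] at this
      exact this
  · intro j hj heq
    simp only at heq ⊢
    rw [hfst j, hfst (j+1)] at heq
    have h := hτ.2.2.2 j (by rw [hlen]; exact hj) heq
    constructor
    · intro h1; rw [hfst (j-1), hfst j]; exact h.1 h1
    · intro h2; rw [hfst (j+2), hfst (j+1)]; exact h.2 (by rw [hlen]; exact h2)
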